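/- The orthogonal projections L₁, L₂, L₃ of the circumcenter O onto the symmedian lines AL, BL, CL respectively are given by the affine combinations L₁ = ((b²+c²−a²) • A + b² • B + c² • C)/(2(b²+c²)−a²), L₂ = (a² • A + (c²+a²−b²) • B + c² • C)/(2(c²+a²)−b²), and L₃ = (a² • A + b² • B + (a²+b²−c²) • C)/(2(a²+b²)−c²). -/

import Mathlib

open EuclideanGeometry RealInnerProductSpace
noncomputable section
abbrev E := EuclideanSpace ℝ (Fin 2)

lemma proj_eq {s : AffineSubspace ℝ E} [Nonempty s] {P O : E}
    (h1 : P ∈ s) (h2 : P -ᵥ O ∈ s.directionᗮ) :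
    (EuclideanGeometry.orthogonalProjection s O : E) = P := by
  have h := inter_eq_singleton_orthogonalProjection (s := s) O
  have hP : P ∈ (s : Set E) ∩ (AffineSubspace.mk' O s.directionᗮ) :=
    ⟨h1, AffineSubspace.mem_mk'.2 h2⟩
  rw [h] at hP
  exact hP.symm

lemma aux (A B C O L : E) (a b c S D : ℝ)
    (ha : a = dist B C) (hb : b = dist C A) (hc : c = dist A B)
    (hOAB : dist O A = dist O B) (hOAC : dist O A = dist O C)
    (hS : S = a ^ 2 + b ^ 2 + c ^ 2) (hS0 : S ≠ 0)
    (hD : D = 2 * (b ^ 2 + c ^ 2) - a ^ 2) (hD0 : D ≠ 0)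
    (hL : L = S⁻¹ • (a ^ 2 • A + b ^ 2 • B + c ^ 2 • C)) :
    (EuclideanGeometry.orthogonalProjection (affineSpan ℝ {A, L}) O : E)
      = D⁻¹ • ((b ^ 2 + c ^ 2 - a ^ 2) • A + b ^ 2 • B + c ^ 2 • C) := by
  set u : E := B - A with hu
  set v : E := C - A with hv
  set w : E := b ^ 2 • u + c ^ 2 • v with hw
  have hSw : S • (L - A) = w := by
    rw [hL, smul_sub, smul_inv_smul₀ hS0, hS, hw, hu, hv]
    module
  have hLA : L - A = S⁻¹ • w := by rw [← hSw, inv_smul_smul₀ hS0]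
  set P : E := A + D⁻¹ • w with hP
  -- inner product facts
  have huu : ⟪u, u⟫ = c ^ 2 := by
    rw [real_inner_self_eq_norm_sq, hu, ← dist_eq_norm, dist_comm, ← hc]
  have hvv : ⟪v, v⟫ = b ^ 2 := by
    rw [real_inner_self_eq_norm_sq, hv, ← dist_eq_norm, ← hb]
  have huv : ⟪u, v⟫ = (c ^ 2 + b ^ 2 - a ^ 2) / 2 := by
    have h1 : ‖u - v‖ ^ 2 = ‖u‖ ^ 2 - 2 * ⟪u, v⟫ + ‖v‖ ^ 2 := norm_sub_sq_real u v
    have h2 : ‖u - v‖ = a := by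
      rw [hu, hv, ha]; rw [dist_eq_norm]; congr 1; abel
    have h3 : ‖u‖ = c := by rw [hu, ← dist_eq_norm, dist_comm, hc]
    have h4 : ‖v‖ = b := by rw [hv, ← dist_eq_norm, ← hb]
    rw [h2, h3, h4] at h1; linarith
  have hvu : ⟪v, u⟫ = (c ^ 2 + b ^ 2 - a ^ 2) / 2 := by rw [real_inner_comm]; exact huv
  have hOu : ⟪O - A, u⟫ = c ^ 2 / 2 := by
    have h1 : ‖(O - A) - u‖ ^ 2 = ‖O - A‖ ^ 2 - 2 * ⟪O - A, u⟫ + ‖u‖ ^ 2 :=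
      norm_sub_sq_real _ _
    have h2 : ‖(O - A) - u‖ = dist O A := by
      rw [hOAB, dist_eq_norm]; congr 1; rw [hu]; abel
    have h3 : ‖O - A‖ = dist O A := by rw [dist_eq_norm]
    have h4 : ‖u‖ = c := by rw [hu, ← dist_eq_norm, dist_comm, hc]
    rw [h2, h3, h4] at h1; linarith
  have hOv : ⟪O - A, v⟫ = b ^ 2 / 2 := by
    have h1 : ‖(O - A) - v‖ ^ 2 = ‖O - A‖ ^ 2 - 2 * ⟪O - A, v⟫ + ‖v‖ ^ 2 :=
      norm_sub_sq_real _ _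
    have h2 : ‖(O - A) - v‖ = dist O A := by
      rw [hOAC, dist_eq_norm]; congr 1; rw [hv]; abel
    have h3 : ‖O - A‖ = dist O A := by rw [dist_eq_norm]
    have h4 : ‖v‖ = b := by rw [hv, ← dist_eq_norm, ← hb]
    rw [h2, h3, h4] at h1; linarith
  have hww : ⟪w, w⟫ = b ^ 2 * c ^ 2 * D := by
    simp only [hw, inner_add_left, inner_add_right, real_inner_smul_left,
      real_inner_smul_right, huu, hvv, huv, hvu]
    rw [hD]; ring
  have hOw : ⟪O - A, w⟫ = b ^ 2 * c ^ 2 := by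
    simp only [hw, inner_add_right, real_inner_smul_right, hOu, hOv]
    ring
  have hmem : P ∈ affineSpan ℝ {A, L} := by
    have hlm : AffineMap.lineMap A L (S / D) = P := by
      rw [AffineMap.lineMap_apply]
      have : (S / D) • (L -ᵥ A) = D⁻¹ • w := by
        rw [vsub_eq_sub, hLA, smul_smul]
        congr 1
        field_simp
      rw [this, hP]
      simp [vadd_eq_add]
      abel
    rw [← hlm]
    exact AffineMap.lineMap_mem_affineSpan_pair _ _ _
  have horth : P -ᵥ O ∈ (affineSpan ℝ {A, L}).directionᗮ := by
    rw [direction_affineSpan, vectorSpan_pair]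
    rw [Submodule.mem_orthogonal_singleton_iff_inner_left]
    have hPO : P -ᵥ O = D⁻¹ • w - (O - A) := by rw [vsub_eq_sub, hP]; abel
    have hAL : A -ᵥ L = -(S⁻¹ • w) := by rw [vsub_eq_sub, ← hLA]; abel
    rw [hPO, hAL, inner_neg_right, inner_sub_left, real_inner_smul_left,
      real_inner_smul_right, real_inner_smul_right, hww, hOw]
    field_simp
    ring
  have := proj_eq hmem horth
  rw [this, hP]
  rw [eq_comm, inv_smul_eq_iff₀ hD0, smul_add, smul_inv_smul₀ hD0, hD, hw, hu, hv]
  module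

set_option maxHeartbeats 1000000 in
theorem stmt11 (A B C O L L₁ L₂ L₃ : EuclideanSpace ℝ (Fin 2)) (R a b c : ℝ)
    (hABC : AffineIndependent ℝ ![A, B, C])
    (hR : 0 < R) (hOA : dist O A = R) (hOB : dist O B = R) (hOC : dist O C = R)
    (ha : a = dist B C) (hb : b = dist C A) (hc : c = dist A B)
    (hL : L = (a ^ 2 + b ^ 2 + c ^ 2)⁻¹ • (a ^ 2 • A + b ^ 2 • B + c ^ 2 • C))
    (hL₁ : L₁ = EuclideanGeometry.orthogonalProjection (affineSpan ℝ {A, L}) O)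
    (hL₂ : L₂ = EuclideanGeometry.orthogonalProjection (affineSpan ℝ {B, L}) O)
    (hL₃ : L₃ = EuclideanGeometry.orthogonalProjection (affineSpan ℝ {C, L}) O) :
    L₁ = (2 * (b ^ 2 + c ^ 2) - a ^ 2)⁻¹ •
        ((b ^ 2 + c ^ 2 - a ^ 2) • A + b ^ 2 • B + c ^ 2 • C) ∧
    L₂ = (2 * (c ^ 2 + a ^ 2) - b ^ 2)⁻¹ •
        (a ^ 2 • A + (c ^ 2 + a ^ 2 - b ^ 2) • B + c ^ 2 • C) ∧
    L₃ = (2 * (a ^ 2 + b ^ 2) - c ^ 2)⁻¹ •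
        (a ^ 2 • A + b ^ 2 • B + (a ^ 2 + b ^ 2 - c ^ 2) • C) := by
  have ncol : ¬Collinear ℝ ({A, B, C} : Set E) :=
    affineIndependent_iff_not_collinear_set.mp hABC
  have hBC : B ≠ C := by
    intro h; apply ncol
    rw [h, show ({A, C, C} : Set E) = {A, C} by simp]
    exact collinear_pair ℝ A C
  have hCA : C ≠ A := by
    intro h; apply ncol
    rw [h, show ({A, B, A} : Set E) = {A, B} by
      simp [Set.insert_comm, Set.pair_comm]]
    exact collinear_pair ℝ A B
  have hAB : A ≠ B := by
    intro h; apply ncol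
    rw [h, show ({B, B, C} : Set E) = {B, C} by simp]
    exact collinear_pair ℝ B C
  have a0 : 0 < a := ha ▸ dist_pos.2 hBC
  have b0 : 0 < b := hb ▸ dist_pos.2 hCA
  have c0 : 0 < c := hc ▸ dist_pos.2 hAB
  -- strict triangle inequalities
  have tri : ∀ X Y Z : E, ¬Collinear ℝ ({X, Y, Z} : Set E) →
      dist X Z < dist X Y + dist Y Z := by
    intro X Y Z hncol
    refine lt_of_le_of_ne (dist_triangle X Y Z) fun hh => hncol ?_
    exact (dist_add_dist_eq_iff.mp hh.symm).collinear
  have habc : a < b + c := by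
    have := tri B A C (by
      intro h; apply ncol
      have e : ({A, B, C} : Set E) = {B, A, C} := by ext x; simp; tauto
      rwa [e])
    rw [ha, hb, hc]
    rw [dist_comm B A, dist_comm A C] at this
    linarith
  have hbca : b < c + a := by
    have := tri C B A (by
      intro h; apply ncol
      have e : ({A, B, C} : Set E) = {C, B, A} := by ext x; simp; tauto
      rwa [e])
    rw [ha, hb, hc]
    rw [dist_comm C B, dist_comm B A] at this
    linarith
  have hcab : c < a + b := by
    have := tri A C B (by
      intro h; apply ncol
      have e : ({A, B, C} : Set E) = {A, C, B} := by ext x; simp; tauto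
      rwa [e])
    rw [ha, hb, hc]
    rw [dist_comm A C, dist_comm C B] at this
    linarith
  have hS0 : a ^ 2 + b ^ 2 + c ^ 2 ≠ 0 := by positivity
  have hS0' : b ^ 2 + c ^ 2 + a ^ 2 ≠ 0 := by positivity
  have hS0'' : c ^ 2 + a ^ 2 + b ^ 2 ≠ 0 := by positivity
  have hD10 : 2 * (b ^ 2 + c ^ 2) - a ^ 2 ≠ 0 := by
    have h1 : 0 < b + c - a := by linarith
    have h2 : 0 < b + c + a := by linarith
    nlinarith [mul_pos h1 h2, sq_nonneg (b - c)]
  have hD20 : 2 * (c ^ 2 + a ^ 2) - b ^ 2 ≠ 0 := by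
    have h1 : 0 < c + a - b := by linarith
    have h2 : 0 < c + a + b := by linarith
    nlinarith [mul_pos h1 h2, sq_nonneg (c - a)]
  have hD30 : 2 * (a ^ 2 + b ^ 2) - c ^ 2 ≠ 0 := by
    have h1 : 0 < a + b - c := by linarith
    have h2 : 0 < a + b + c := by linarith
    nlinarith [mul_pos h1 h2, sq_nonneg (a - b)]
  refine ⟨?_, ?_, ?_⟩
  · rw [hL₁]
    exact aux A B C O L a b c _ _ ha hb hc (hOA.trans hOB.symm) (hOA.trans hOC.symm)
      rfl hS0 rfl hD10 hL
  · have hL' : L = (b ^ 2 + c ^ 2 + a ^ 2)⁻¹ • (b ^ 2 • B + c ^ 2 • C + a ^ 2 • A) := by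
      rw [hL, show b ^ 2 + c ^ 2 + a ^ 2 = a ^ 2 + b ^ 2 + c ^ 2 by ring]
      module
    have h := aux B C A O L b c a _ _ hb hc ha (hOB.trans hOC.symm) (hOB.trans hOA.symm)
      rfl hS0' rfl hD20 hL'
    rw [hL₂, h]
    module
  · have hL' : L = (c ^ 2 + a ^ 2 + b ^ 2)⁻¹ • (c ^ 2 • C + a ^ 2 • A + b ^ 2 • B) := by
      rw [hL, show c ^ 2 + a ^ 2 + b ^ 2 = a ^ 2 + b ^ 2 + c ^ 2 by ring]
      module
    have h := aux C A B O L c a b _ _ hc ha hb (hOC.trans hOA.symm) (hOC.trans hOB.symm)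
      rfl hS0'' rfl hD30 hL'
    rw [hL₃, h]
    module
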